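/- arXiv:0905.0201 — 2 statements merged into one kernel-verified Lean document; each statement's English description precedes it below -/
import Mathlib

section
/- Conversely, if E_Hmin(|ψ⟩) = 0 for a multipartite pure state |ψ⟩, then |ψ⟩ is a product state: there exist unit vectors |φ_k⟩ ∈ ℂ^{d_k} with |ψ⟩ = e^{iθ} |φ_1⟩ ⊗ ... ⊗ |φ_n⟩ for some phase θ. -/
open scoped BigOperators

/-- Shannon entropy of a finite family of reals (with the convention `0 log 0 = 0`). -/
noncomputable def Hsh {ι : Type*} [Fintype ι] (p : ι → ℝ) : ℝ :=
  ∑ i, Real.negMulLog (p i)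

/-- Measurement entropy of a multipartite pure state: Shannon entropy of the squared
moduli of the computational-basis amplitudes. -/
noncomputable def Hmeas {ι : Type*} [Fintype ι] [DecidableEq ι] {d : ι → ℕ}
    (ψ : (∀ k, Fin (d k)) → ℂ) : ℝ :=
  ∑ i, Real.negMulLog (‖ψ i‖ ^ 2)

/-- Application of a local (one-subsystem-wise) linear transformation
`U_1 ⊗ ... ⊗ U_n` to a multipartite state. -/
noncomputable def applyLocal {ι : Type*} [Fintype ι] [DecidableEq ι] {d : ι → ℕ}
    (U : ∀ k, Matrix (Fin (d k)) (Fin (d k)) ℂ) (ψ : (∀ k, Fin (d k)) → ℂ) :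
    (∀ k, Fin (d k)) → ℂ :=
  fun i => ∑ j, (∏ k, U k (i k) (j k)) * ψ j

/-- `E_Hmin`: the minimum over local unitaries of the measurement entropy. -/
noncomputable def EHmin {ι : Type*} [Fintype ι] [DecidableEq ι] {d : ι → ℕ}
    (ψ : (∀ k, Fin (d k)) → ℂ) : ℝ :=
  ⨅ U : ∀ k, Matrix.unitaryGroup (Fin (d k)) ℂ,
    Hmeas (applyLocal (fun k => (U k : Matrix (Fin (d k)) (Fin (d k)) ℂ)) ψ)

/-! ### Auxiliary lemmas -/

lemma sum_normSq_cast {n : Type*} [Fintype n] (v : n → ℂ) :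
    ((∑ i, ‖v i‖ ^ 2 : ℝ) : ℂ) = ∑ i, v i * (starRingEnd ℂ) (v i) := by
  push_cast
  refine Finset.sum_congr rfl fun i _ => ?_
  rw [Complex.mul_conj]
  norm_cast
  simp [Complex.normSq_eq_norm_sq]

lemma prod_ite_delta {ι : Type*} [Fintype ι] [DecidableEq ι] {d : ι → ℕ}
    (a b : ∀ k, Fin (d k)) :
    (∏ k, if a k = b k then (1 : ℂ) else 0) = if a = b then 1 else 0 := by
  by_cases h : a = b
  · simp [h]
  · obtain ⟨k, hk⟩ := Function.ne_iff.mp h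
    rw [if_neg h]
    exact Finset.prod_eq_zero (Finset.mem_univ k) (if_neg hk)

lemma unitary_col {m : ℕ} {A : Matrix (Fin m) (Fin m) ℂ}
    (hA : A ∈ Matrix.unitaryGroup (Fin m) ℂ) (a b : Fin m) :
    ∑ x, A x a * (starRingEnd ℂ) (A x b) = if a = b then 1 else 0 := by
  have h1 : star A * A = 1 := hA.1
  have h := congrFun (congrFun h1 b) a
  simp only [Matrix.mul_apply, Matrix.star_apply, Matrix.one_apply] at h
  calc ∑ x, A x a * (starRingEnd ℂ) (A x b)
      = ∑ x, star (A x b) * A x a := by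
        refine Finset.sum_congr rfl fun x _ => ?_
        rw [mul_comm]; rfl
    _ = if a = b then 1 else 0 := by rw [h]; simp [eq_comm]

lemma unitary_row_norm {m : ℕ} {A : Matrix (Fin m) (Fin m) ℂ}
    (hA : A ∈ Matrix.unitaryGroup (Fin m) ℂ) (a : Fin m) :
    ∑ b, ‖A a b‖ ^ 2 = 1 := by
  have h2 : A * star A = 1 := hA.2
  have h := congrFun (congrFun h2 a) a
  simp only [Matrix.mul_apply, Matrix.star_apply, Matrix.one_apply_eq] at h
  have : ((∑ b, ‖A a b‖ ^ 2 : ℝ) : ℂ) = 1 := by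
    rw [sum_normSq_cast]
    simpa using h
  exact_mod_cast this

lemma unitary_col_norm {m : ℕ} {A : Matrix (Fin m) (Fin m) ℂ}
    (hA : A ∈ Matrix.unitaryGroup (Fin m) ℂ) (b : Fin m) :
    ∑ x, ‖A x b‖ ^ 2 = 1 := by
  have h1 : star A * A = 1 := hA.1
  have h := congrFun (congrFun h1 b) b
  simp only [Matrix.mul_apply, Matrix.star_apply, Matrix.one_apply_eq] at h
  have : ((∑ x, ‖A x b‖ ^ 2 : ℝ) : ℂ) = 1 := by
    rw [sum_normSq_cast]
    rw [← h]
    exact Finset.sum_congr rfl fun x _ => (mul_comm _ _)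
  exact_mod_cast this

lemma applyLocal_comp {ι : Type*} [Fintype ι] [DecidableEq ι] {d : ι → ℕ}
    (V U : ∀ k, Matrix (Fin (d k)) (Fin (d k)) ℂ) (ψ : (∀ k, Fin (d k)) → ℂ) :
    applyLocal V (applyLocal U ψ) = applyLocal (fun k => V k * U k) ψ := by
  funext i
  have key : ∀ l : ∀ k, Fin (d k),
      (∏ k, (V k * U k) (i k) (l k))
        = ∑ j : ∀ k, Fin (d k), (∏ k, V k (i k) (j k)) * ∏ k, U k (j k) (l k) := by
    intro l
    simp only [Matrix.mul_apply]
    rw [Finset.prod_univ_sum, Fintype.piFinset_univ]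
    exact Finset.sum_congr rfl fun j _ => Finset.prod_mul_distrib
  simp only [applyLocal, key, Finset.sum_mul, Finset.mul_sum]
  rw [Finset.sum_comm]
  exact Finset.sum_congr rfl fun j _ => Finset.sum_congr rfl fun l _ => by ring

lemma applyLocal_one {ι : Type*} [Fintype ι] [DecidableEq ι] {d : ι → ℕ}
    (ψ : (∀ k, Fin (d k)) → ℂ) :
    applyLocal (fun _ => (1 : Matrix _ _ ℂ)) ψ = ψ := by
  funext i
  simp only [applyLocal, Matrix.one_apply, prod_ite_delta]
  simp

lemma gen_unitary_sum {N n : Type*} [Fintype N] [Fintype n] [DecidableEq n]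
    (M : N → n → ℂ) (x : n → ℂ)
    (hM : ∀ a b, (∑ i, M i a * (starRingEnd ℂ) (M i b)) = if a = b then 1 else 0) :
    ∑ i, (∑ j, M i j * x j) * (starRingEnd ℂ) (∑ l, M i l * x l)
      = ∑ j, x j * (starRingEnd ℂ) (x j) := by
  calc ∑ i, (∑ j, M i j * x j) * (starRingEnd ℂ) (∑ l, M i l * x l)
      = ∑ i, ∑ j, ∑ l, (M i j * (starRingEnd ℂ) (M i l)) * (x j * (starRingEnd ℂ) (x l)) := by
        refine Finset.sum_congr rfl fun i _ => ?_
        rw [map_sum, Finset.sum_mul_sum]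
        refine Finset.sum_congr rfl fun j _ => Finset.sum_congr rfl fun l _ => ?_
        rw [map_mul]; exact mul_mul_mul_comm _ _ _ _
    _ = ∑ j, ∑ l, (∑ i, M i j * (starRingEnd ℂ) (M i l)) * (x j * (starRingEnd ℂ) (x l)) := by
        rw [Finset.sum_comm]
        refine Finset.sum_congr rfl fun j _ => ?_
        rw [Finset.sum_comm]
        exact Finset.sum_congr rfl fun l _ => (Finset.sum_mul _ _ _).symm
    _ = ∑ j, x j * (starRingEnd ℂ) (x j) := by
        refine Finset.sum_congr rfl fun j _ => ?_
        simp only [hM, ite_mul, one_mul, zero_mul]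
        simp

lemma applyLocal_norm {ι : Type*} [Fintype ι] [DecidableEq ι] {d : ι → ℕ}
    {U : ∀ k, Matrix (Fin (d k)) (Fin (d k)) ℂ}
    (hU : ∀ k, U k ∈ Matrix.unitaryGroup (Fin (d k)) ℂ)
    (ψ : (∀ k, Fin (d k)) → ℂ) :
    ∑ i, ‖applyLocal U ψ i‖ ^ 2 = ∑ i, ‖ψ i‖ ^ 2 := by
  have col : ∀ j l : ∀ k, Fin (d k),
      (∑ i : ∀ k, Fin (d k),
        (∏ k, U k (i k) (j k)) * (starRingEnd ℂ) (∏ k, U k (i k) (l k)))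
        = if j = l then 1 else 0 := by
    intro j l
    have h1 : ∀ i : ∀ k, Fin (d k),
        (∏ k, U k (i k) (j k)) * (starRingEnd ℂ) (∏ k, U k (i k) (l k))
          = ∏ k, U k (i k) (j k) * (starRingEnd ℂ) (U k (i k) (l k)) := by
      intro i; rw [map_prod, ← Finset.prod_mul_distrib]
    simp only [h1]
    rw [← Fintype.piFinset_univ,
      ← Finset.prod_univ_sum (fun _ => Finset.univ)
        (fun k m => U k m (j k) * (starRingEnd ℂ) (U k m (l k)))]
    rw [Finset.prod_congr rfl fun k _ => unitary_col (hU k) (j k) (l k)]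
    exact prod_ite_delta j l
  have expand : (∑ i, applyLocal U ψ i * (starRingEnd ℂ) (applyLocal U ψ i))
      = ∑ i, ψ i * (starRingEnd ℂ) (ψ i) := by
    have h := gen_unitary_sum (fun i j : ∀ k, Fin (d k) => ∏ k, U k (i k) (j k)) ψ col
    simpa only [applyLocal] using h
  have := (sum_normSq_cast (applyLocal U ψ)).trans (expand.trans (sum_normSq_cast ψ).symm)
  exact_mod_cast this

lemma isCompact_unitaryGroup (m : ℕ) :
    IsCompact (Matrix.unitaryGroup (Fin m) ℂ : Set (Matrix (Fin m) (Fin m) ℂ)) := by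
  have hclosed : IsClosed (Matrix.unitaryGroup (Fin m) ℂ : Set (Matrix (Fin m) (Fin m) ℂ)) := by
    have hset : (Matrix.unitaryGroup (Fin m) ℂ : Set (Matrix (Fin m) (Fin m) ℂ))
        = (fun A : Matrix (Fin m) (Fin m) ℂ => star A * A) ⁻¹' {1}
          ∩ (fun A : Matrix (Fin m) (Fin m) ℂ => A * star A) ⁻¹' {1} := by
      ext A
      simp only [Set.mem_inter_iff, Set.mem_preimage, Set.mem_singleton_iff, SetLike.mem_coe]
      exact Unitary.mem_iff
    rw [hset]
    have hc1 : Continuous fun A : Matrix (Fin m) (Fin m) ℂ => star A * A :=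
      Continuous.matrix_mul continuous_star continuous_id
    have hc2 : Continuous fun A : Matrix (Fin m) (Fin m) ℂ => A * star A :=
      Continuous.matrix_mul continuous_id continuous_star
    exact (isClosed_singleton.preimage hc1).inter (isClosed_singleton.preimage hc2)
  have hsub : (Matrix.unitaryGroup (Fin m) ℂ : Set (Matrix (Fin m) (Fin m) ℂ))
      ⊆ Set.univ.pi fun _ : Fin m => Set.univ.pi fun _ : Fin m => Metric.closedBall (0:ℂ) 1 := by
    intro A hA
    refine Set.mem_univ_pi.mpr ?_
    intro a
    rw [Set.mem_univ_pi]
    intro b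
    rw [Metric.mem_closedBall, dist_zero_right]
    have h := unitary_col_norm hA b
    have h1 : ‖A a b‖ ^ 2 ≤ 1 := by
      rw [← h]
      exact Finset.single_le_sum (fun x _ => sq_nonneg ‖A x b‖) (Finset.mem_univ a)
    nlinarith [norm_nonneg (A a b)]
  have hbig : IsCompact (Set.univ.pi fun _ : Fin m =>
      Set.univ.pi fun _ : Fin m => Metric.closedBall (0:ℂ) 1 :
        Set (Matrix (Fin m) (Fin m) ℂ)) :=
    isCompact_univ_pi fun _ => isCompact_univ_pi fun _ => isCompact_closedBall _ _
  exact hbig.of_isClosed_subset hclosed hsub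

lemma continuous_obj {ι : Type*} [Fintype ι] [DecidableEq ι] {d : ι → ℕ}
    (ψ : (∀ k, Fin (d k)) → ℂ) :
    Continuous fun M : ∀ k, Matrix (Fin (d k)) (Fin (d k)) ℂ => Hmeas (applyLocal M ψ) := by
  simp only [Hmeas, applyLocal]
  refine continuous_finset_sum _ fun i _ => ?_
  refine Real.continuous_negMulLog.comp ?_
  refine Continuous.pow ?_ 2
  refine Continuous.norm ?_
  refine continuous_finset_sum _ fun j _ => ?_
  refine Continuous.mul ?_ continuous_const
  refine continuous_finset_prod _ fun k _ => ?_
  exact (continuous_apply (j k)).comp ((continuous_apply (i k)).comp (continuous_apply k))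

/-- If `E_Hmin(ψ) = 0` for a multipartite pure state `ψ`, then `ψ` is a product state up
to a global phase. -/
theorem EHmin_eq_zero_imp_product {ι : Type*} [Fintype ι] [DecidableEq ι] {d : ι → ℕ}
    (ψ : (∀ k, Fin (d k)) → ℂ) (hψ : ∑ i, ‖ψ i‖ ^ 2 = 1)
    (h0 : EHmin ψ = 0) :
    ∃ (θ : ℝ) (φ : ∀ k, Fin (d k) → ℂ),
      (∀ k, ∑ j, ‖φ k j‖ ^ 2 = 1) ∧
      ψ = fun i => Complex.exp (θ * Complex.I) * ∏ k, φ k (i k) := by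
  classical
  set T : Set (∀ k, Matrix (Fin (d k)) (Fin (d k)) ℂ) :=
    Set.univ.pi fun k => (Matrix.unitaryGroup (Fin (d k)) ℂ : Set _) with hT
  have hTc : IsCompact T := isCompact_univ_pi fun k => isCompact_unitaryGroup (d k)
  have hTne : T.Nonempty := ⟨fun _ => 1, fun k _ => Submonoid.one_mem _⟩
  obtain ⟨M₀, hM₀T, hmin⟩ :=
    hTc.exists_isMinOn hTne (continuous_obj ψ).continuousOn
  have hmin' := isMinOn_iff.mp hmin
  have hM₀ : ∀ k, M₀ k ∈ Matrix.unitaryGroup (Fin (d k)) ℂ :=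
    fun k => hM₀T k (Set.mem_univ k)
  haveI : Nonempty (∀ k, Matrix.unitaryGroup (Fin (d k)) ℂ) := ⟨fun _ => 1⟩
  have hle : Hmeas (applyLocal M₀ ψ) ≤ EHmin ψ := by
    rw [EHmin]
    refine le_ciInf fun U => ?_
    exact hmin' (fun k => (U k : Matrix (Fin (d k)) (Fin (d k)) ℂ)) fun k _ => (U k).2
  set v : (∀ k, Fin (d k)) → ℂ := applyLocal M₀ ψ with hv
  have hv1 : ∑ i, ‖v i‖ ^ 2 = 1 := by rw [hv, applyLocal_norm hM₀, hψ]
  have hle1 : ∀ i, ‖v i‖ ^ 2 ≤ 1 := by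
    intro i
    rw [← hv1]
    exact Finset.single_le_sum (fun j _ => sq_nonneg ‖v j‖) (Finset.mem_univ i)
  have hterm_nonneg : ∀ i, 0 ≤ Real.negMulLog (‖v i‖ ^ 2) :=
    fun i => Real.negMulLog_nonneg (sq_nonneg _) (hle1 i)
  have hfnn : (0:ℝ) ≤ Hmeas v := Finset.sum_nonneg fun i _ => hterm_nonneg i
  have hf0 : Hmeas v = 0 := le_antisymm (hle.trans_eq h0) hfnn
  have hzero : ∀ i, Real.negMulLog (‖v i‖ ^ 2) = 0 := by
    have h := (Finset.sum_eq_zero_iff_of_nonneg fun i _ => hterm_nonneg i).mp hf0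
    exact fun i => h i (Finset.mem_univ i)
  have h01 : ∀ i, ‖v i‖ ^ 2 = 0 ∨ ‖v i‖ ^ 2 = 1 := by
    intro i
    have h := hzero i
    rw [Real.negMulLog, neg_mul, neg_eq_zero, mul_eq_zero] at h
    rcases h with h | h
    · exact Or.inl h
    · rcases Real.log_eq_zero.mp h with h | h | h
      · exact Or.inl h
      · exact Or.inr h
      · nlinarith [sq_nonneg ‖v i‖]
  obtain ⟨i₀, hi₀⟩ : ∃ i₀, ‖v i₀‖ ^ 2 = 1 := by
    by_contra hc
    push_neg at hc
    have hall : ∀ i, ‖v i‖ ^ 2 = 0 := fun i => (h01 i).resolve_right (hc i)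
    rw [Finset.sum_congr rfl fun i _ => hall i] at hv1
    simp at hv1
  have hrest : ∀ i, i ≠ i₀ → v i = 0 := by
    intro i hi
    have hadd : ‖v i₀‖ ^ 2 + ∑ j ∈ Finset.univ.erase i₀, ‖v j‖ ^ 2 = 1 := by
      have h : ‖v i₀‖ ^ 2 + ∑ j ∈ Finset.univ.erase i₀, ‖v j‖ ^ 2 = ∑ j, ‖v j‖ ^ 2 :=
        Finset.add_sum_erase Finset.univ (fun j => ‖v j‖ ^ 2) (Finset.mem_univ i₀)
      rw [hv1] at h
      exact h
    have hsum : ∑ j ∈ Finset.univ.erase i₀, ‖v j‖ ^ 2 = 0 := by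
      rw [hi₀] at hadd; linarith
    have hz := (Finset.sum_eq_zero_iff_of_nonneg fun j _ => sq_nonneg ‖v j‖).mp hsum i
      (Finset.mem_erase.mpr ⟨hi, Finset.mem_univ i⟩)
    have : ‖v i‖ = 0 := by nlinarith [norm_nonneg (v i)]
    exact norm_eq_zero.mp this
  set θ : ℝ := Complex.arg (v i₀) with hθ
  have hnorm : ‖v i₀‖ = 1 := by nlinarith [norm_nonneg (v i₀)]
  have hvi₀ : v i₀ = Complex.exp ((θ : ℂ) * Complex.I) := by
    rw [hθ]
    conv_lhs => rw [← Complex.norm_mul_exp_arg_mul_I (v i₀)]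
    have h1 : ((‖v i₀‖ : ℝ) : ℂ) = 1 := by
      rw [hnorm]; norm_num
    rw [h1, one_mul]
  refine ⟨θ, fun k m => (starRingEnd ℂ) (M₀ k (i₀ k) m), ?_, ?_⟩
  · intro k
    simpa using unitary_row_norm (hM₀ k) (i₀ k)
  · have hpsi : applyLocal (fun k => star (M₀ k)) v = ψ := by
      rw [hv, applyLocal_comp]
      have h1 : (fun k => star (M₀ k) * M₀ k) = fun _ => (1 : Matrix _ _ ℂ) :=
        funext fun k => (hM₀ k).1
      rw [h1, applyLocal_one]
    funext i
    rw [← hpsi]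
    rw [show applyLocal (fun k => star (M₀ k)) v i
        = ∑ j, (∏ k, (star (M₀ k)) (i k) (j k)) * v j from rfl]
    rw [Finset.sum_eq_single i₀ (fun j _ hj => by rw [hrest j hj, mul_zero])
      (fun h => absurd (Finset.mem_univ i₀) h)]
    have hprod : (∏ k, (star (M₀ k)) (i k) (i₀ k))
        = ∏ k, (starRingEnd ℂ) (M₀ k (i₀ k) (i k)) :=
      Finset.prod_congr rfl fun k _ => by rw [Matrix.star_apply]; rfl
    rw [hprod, hvi₀]
    exact mul_comm _ _
end

section
/- E_Hmin is invariant under attaching an unentangled ancilla: for any multipartite pure state |ψ⟩ and any unit vector |φ⟩ (ancilla), E_Hmin(|ψ⟩ ⊗ |φ⟩) = E_Hmin(|ψ⟩). -/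
open scoped BigOperators

/-- A matrix family with orthonormal columns preserves the sum of squared norms. -/
lemma l2_invariant {α β : Type*} [Fintype α] [Fintype β] [DecidableEq β]
    (M : α → β → ℂ)
    (hM : ∀ j j', ∑ i, (starRingEnd ℂ) (M i j) * M i j' = if j = j' then 1 else 0)
    (v : β → ℂ) :
    ∑ i, ‖∑ j, M i j * v j‖ ^ 2 = ∑ j, ‖v j‖ ^ 2 := by
  have h1 : ∀ z : ℂ, ((‖z‖ ^ 2 : ℝ) : ℂ) = (starRingEnd ℂ) z * z := by
    intro z
    rw [mul_comm, Complex.mul_conj]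
    simp [Complex.normSq_eq_norm_sq]
  have key : ∑ i, (starRingEnd ℂ) (∑ j, M i j * v j) * (∑ j, M i j * v j)
      = ∑ j, (starRingEnd ℂ) (v j) * v j := by
    calc ∑ i, (starRingEnd ℂ) (∑ j, M i j * v j) * (∑ j, M i j * v j)
        = ∑ i, ∑ j, ∑ j', ((starRingEnd ℂ) (M i j) * M i j') *
            ((starRingEnd ℂ) (v j) * v j') := by
          refine Finset.sum_congr rfl fun i _ => ?_
          rw [map_sum, Finset.sum_mul_sum]
          refine Finset.sum_congr rfl fun j _ => Finset.sum_congr rfl fun j' _ => ?_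
          rw [map_mul]; ring
      _ = ∑ j, ∑ j', (∑ i, (starRingEnd ℂ) (M i j) * M i j') *
            ((starRingEnd ℂ) (v j) * v j') := by
          rw [Finset.sum_comm]
          refine Finset.sum_congr rfl fun j _ => ?_
          rw [Finset.sum_comm]
          refine Finset.sum_congr rfl fun j' _ => ?_
          rw [Finset.sum_mul]
      _ = ∑ j, ∑ j', (if j = j' then (1:ℂ) else 0) * ((starRingEnd ℂ) (v j) * v j') := by
          simp_rw [hM]
      _ = ∑ j, (starRingEnd ℂ) (v j) * v j := by
          simp
  apply Complex.ofReal_injective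
  rw [Complex.ofReal_sum, Complex.ofReal_sum]
  simp_rw [h1]
  exact key

/-- Orthogonality of columns of a tensor product of unitaries. -/
lemma tensor_orth {ι : Type*} [Fintype ι] [DecidableEq ι] {d : ι → ℕ}
    (U : ∀ k, Matrix.unitaryGroup (Fin (d k)) ℂ) (j j' : ∀ k, Fin (d k)) :
    ∑ i : ∀ k, Fin (d k), (starRingEnd ℂ) (∏ k, (U k : Matrix (Fin (d k)) (Fin (d k)) ℂ) (i k) (j k)) *
      (∏ k, (U k : Matrix (Fin (d k)) (Fin (d k)) ℂ) (i k) (j' k))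
      = if j = j' then 1 else 0 := by
  have step : ∀ i : ∀ k, Fin (d k),
      (starRingEnd ℂ) (∏ k, (U k : Matrix _ _ ℂ) (i k) (j k)) *
        (∏ k, (U k : Matrix _ _ ℂ) (i k) (j' k))
      = ∏ k, ((starRingEnd ℂ) ((U k : Matrix _ _ ℂ) (i k) (j k)) *
          (U k : Matrix _ _ ℂ) (i k) (j' k)) := by
    intro i
    rw [map_prod, ← Finset.prod_mul_distrib]
  simp_rw [step]
  have hps := Fintype.prod_sum (R := ℂ) (κ := fun k => Fin (d k))
    (f := fun k x => (starRingEnd ℂ) ((U k : Matrix (Fin (d k)) (Fin (d k)) ℂ) x (j k)) *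
      (U k : Matrix (Fin (d k)) (Fin (d k)) ℂ) x (j' k))
  rw [← hps]
  have col : ∀ k, ∑ x, (starRingEnd ℂ) ((U k : Matrix (Fin (d k)) (Fin (d k)) ℂ) x (j k)) *
      (U k : Matrix (Fin (d k)) (Fin (d k)) ℂ) x (j' k) = if j k = j' k then (1:ℂ) else 0 := by
    intro k
    have h := Matrix.UnitaryGroup.star_mul_self (U k)
    have h2 := congrArg (fun A : Matrix (Fin (d k)) (Fin (d k)) ℂ => A (j k) (j' k)) h
    simpa [Matrix.mul_apply, Matrix.star_apply, Matrix.one_apply] using h2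
  simp_rw [col]
  by_cases h : j = j'
  · subst h; simp
  · obtain ⟨k, hk⟩ := Function.ne_iff.mp h
    rw [if_neg h]
    exact Finset.prod_eq_zero (Finset.mem_univ k) (if_neg hk)

/-- Local unitaries preserve the sum of squared amplitude norms. -/
lemma applyLocal_l2 {ι : Type*} [Fintype ι] [DecidableEq ι] {d : ι → ℕ}
    (U : ∀ k, Matrix.unitaryGroup (Fin (d k)) ℂ) (ψ : (∀ k, Fin (d k)) → ℂ) :
    ∑ i, ‖applyLocal (fun k => (U k : Matrix (Fin (d k)) (Fin (d k)) ℂ)) ψ i‖ ^ 2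
      = ∑ i, ‖ψ i‖ ^ 2 :=
  l2_invariant _ (tensor_orth U) ψ

/-- Entropy of a normalized family is nonnegative. -/
lemma Hsh_nonneg_of_sum_one {α : Type*} [Fintype α] (p : α → ℝ)
    (h0 : ∀ i, 0 ≤ p i) (h1 : ∑ i, p i = 1) :
    0 ≤ ∑ i, Real.negMulLog (p i) := by
  refine Finset.sum_nonneg fun i _ => Real.negMulLog_nonneg (h0 i) ?_
  calc p i ≤ ∑ j, p j := Finset.single_le_sum (fun j _ => h0 j) (Finset.mem_univ i)
    _ = 1 := h1

lemma Hmeas_applyLocal_nonneg {ι : Type*} [Fintype ι] [DecidableEq ι] {d : ι → ℕ}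
    (U : ∀ k, Matrix.unitaryGroup (Fin (d k)) ℂ) (ψ : (∀ k, Fin (d k)) → ℂ)
    (hψ : ∑ i, ‖ψ i‖ ^ 2 = 1) :
    0 ≤ Hmeas (applyLocal (fun k => (U k : Matrix (Fin (d k)) (Fin (d k)) ℂ)) ψ) := by
  refine Hsh_nonneg_of_sum_one _ (fun i => sq_nonneg _) ?_
  rw [applyLocal_l2 U ψ, hψ]

def combineEquiv {ι : Type*} (F : ι ⊕ Unit → Type*) :
    ((∀ a, F (Sum.inl a)) × F (Sum.inr ())) ≃ (∀ k, F k) where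
  toFun p k := match k with
    | Sum.inl a => p.1 a
    | Sum.inr () => p.2
  invFun f := (fun a => f (Sum.inl a), f (Sum.inr ()))
  left_inv p := rfl
  right_inv f := by
    funext k
    cases k with
    | inl a => rfl
    | inr u => cases u; rfl

lemma prod_sum_unit {ι : Type*} [Fintype ι] (h : ι ⊕ Unit → ℂ) :
    ∏ k, h k = (∏ a, h (Sum.inl a)) * h (Sum.inr ()) := by
  rw [Fintype.prod_sum_type]
  simp

/-- Factorization of `applyLocal` on a product state. -/
lemma applyLocal_factor {ι : Type*} [Fintype ι] [DecidableEq ι] {d : ι → ℕ} {m : ℕ}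
    (ψ : (∀ k, Fin (d k)) → ℂ) (φ : Fin m → ℂ)
    (ψ' : (∀ k : ι ⊕ Unit, Fin (Sum.elim d (fun _ => m) k)) → ℂ)
    (hψ' : ∀ i, ψ' i = ψ (fun a => i (Sum.inl a)) * φ (i (Sum.inr ())))
    (U : ∀ a : ι, Matrix (Fin (d a)) (Fin (d a)) ℂ) (V : Matrix (Fin m) (Fin m) ℂ)
    (i : ∀ a, Fin (d a)) (c : Fin m) :
    applyLocal (fun k : ι ⊕ Unit => Sum.rec (motive := fun k =>
        Matrix (Fin (Sum.elim d (fun _ => m) k)) (Fin (Sum.elim d (fun _ => m) k)) ℂ)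
        U (fun _ => V) k) ψ'
      (combineEquiv _ (i, c))
    = applyLocal U ψ i * (∑ c', V c c' * φ c') := by
  unfold applyLocal
  rw [← Equiv.sum_comp (combineEquiv (fun k => Fin (Sum.elim d (fun _ => m) k)))]
  rw [Fintype.sum_prod_type]
  rw [Finset.sum_mul_sum]
  refine Finset.sum_congr rfl fun b _ => Finset.sum_congr rfl fun c' _ => ?_
  rw [hψ']
  have h1 : (fun a => combineEquiv (fun k => Fin (Sum.elim d (fun _ => m) k)) (b, c') (Sum.inl a)) = b := rfl
  have h2 : combineEquiv (fun k => Fin (Sum.elim d (fun _ => m) k)) (b, c') (Sum.inr ()) = c' := rfl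
  rw [h1, h2]
  rw [prod_sum_unit]
  show ((∏ a, U a (i a) (b a)) * V c c') * (ψ b * φ c')
      = ((∏ k, U k (i k) (b k)) * ψ b) * (V c c' * φ c')
  ring

lemma sum_negMulLog_prod {α β : Type*} [Fintype α] [Fintype β] (p : α → ℝ) (q : β → ℝ)
    (hp : ∑ i, p i = 1) (hq : ∑ j, q j = 1) :
    ∑ i, ∑ j, Real.negMulLog (p i * q j)
      = ∑ i, Real.negMulLog (p i) + ∑ j, Real.negMulLog (q j) := by
  simp_rw [Real.negMulLog_mul, Finset.sum_add_distrib, ← Finset.sum_mul, ← Finset.mul_sum, hq]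
  rw [← Finset.sum_mul, hp]
  ring

/-- Unitary `V` (columns orthonormal as in `l2_invariant`). -/
lemma unitary_col_orth {n : Type*} [Fintype n] [DecidableEq n]
    (V : Matrix.unitaryGroup n ℂ) (j j' : n) :
    ∑ i, (starRingEnd ℂ) ((V : Matrix n n ℂ) i j) * (V : Matrix n n ℂ) i j'
      = if j = j' then 1 else 0 := by
  have h := Matrix.UnitaryGroup.star_mul_self V
  have h2 := congrArg (fun A : Matrix n n ℂ => A j j') h
  simpa [Matrix.mul_apply, Matrix.star_apply, Matrix.one_apply] using h2

/-- Splitting of the measurement entropy of a product state under a product unitary. -/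
lemma Hmeas_split {ι : Type*} [Fintype ι] [DecidableEq ι] {d : ι → ℕ} {m : ℕ}
    (ψ : (∀ k, Fin (d k)) → ℂ) (hψ : ∑ i, ‖ψ i‖ ^ 2 = 1)
    (φ : Fin m → ℂ) (hφ : ∑ j, ‖φ j‖ ^ 2 = 1)
    (ψ' : (∀ k : ι ⊕ Unit, Fin (Sum.elim d (fun _ => m) k)) → ℂ)
    (hψ' : ∀ i, ψ' i = ψ (fun a => i (Sum.inl a)) * φ (i (Sum.inr ())))
    (U : ∀ a, Matrix.unitaryGroup (Fin (d a)) ℂ) (V : Matrix.unitaryGroup (Fin m) ℂ) :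
    Hmeas (applyLocal (fun k : ι ⊕ Unit =>
        ((Sum.rec (motive := fun k => Matrix.unitaryGroup (Fin (Sum.elim d (fun _ => m) k)) ℂ)
          U (fun _ => V) k : Matrix.unitaryGroup (Fin (Sum.elim d (fun _ => m) k)) ℂ) :
          Matrix (Fin (Sum.elim d (fun _ => m) k)) (Fin (Sum.elim d (fun _ => m) k)) ℂ)) ψ')
      = Hmeas (applyLocal (fun a => (U a : Matrix (Fin (d a)) (Fin (d a)) ℂ)) ψ)
        + ∑ c, Real.negMulLog (‖∑ c', (V : Matrix (Fin m) (Fin m) ℂ) c c' * φ c'‖ ^ 2) := by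
  have hWmat : (fun k : ι ⊕ Unit =>
        ((Sum.rec (motive := fun k => Matrix.unitaryGroup (Fin (Sum.elim d (fun _ => m) k)) ℂ)
          U (fun _ => V) k : Matrix.unitaryGroup (Fin (Sum.elim d (fun _ => m) k)) ℂ) :
          Matrix (Fin (Sum.elim d (fun _ => m) k)) (Fin (Sum.elim d (fun _ => m) k)) ℂ))
      = fun k : ι ⊕ Unit => Sum.rec (motive := fun k =>
          Matrix (Fin (Sum.elim d (fun _ => m) k)) (Fin (Sum.elim d (fun _ => m) k)) ℂ)
          (fun a => (U a : Matrix (Fin (d a)) (Fin (d a)) ℂ))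
          (fun _ => (V : Matrix (Fin m) (Fin m) ℂ)) k := by
    funext k
    cases k with
    | inl a => rfl
    | inr u => cases u; rfl
  rw [hWmat]
  have hx1 : ∑ i, ‖applyLocal (fun a => (U a : Matrix (Fin (d a)) (Fin (d a)) ℂ)) ψ i‖ ^ 2 = 1 := by
    rw [applyLocal_l2 U ψ, hψ]
  have main : Hmeas (applyLocal (fun k : ι ⊕ Unit => Sum.rec (motive := fun k =>
          Matrix (Fin (Sum.elim d (fun _ => m) k)) (Fin (Sum.elim d (fun _ => m) k)) ℂ)
          (fun a => (U a : Matrix (Fin (d a)) (Fin (d a)) ℂ))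
          (fun _ => (V : Matrix (Fin m) (Fin m) ℂ)) k) ψ')
      = ∑ i, ∑ c, Real.negMulLog
          (‖applyLocal (fun a => (U a : Matrix (Fin (d a)) (Fin (d a)) ℂ)) ψ i‖ ^ 2 *
           ‖∑ c', (V : Matrix (Fin m) (Fin m) ℂ) c c' * φ c'‖ ^ 2) := by
    rw [Hmeas, ← Equiv.sum_comp (combineEquiv (fun k => Fin (Sum.elim d (fun _ => m) k)))]
    rw [Fintype.sum_prod_type]
    refine Finset.sum_congr rfl fun i _ => Finset.sum_congr rfl fun c _ => ?_
    rw [applyLocal_factor ψ φ ψ' hψ' _ _ i c, norm_mul, mul_pow]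
  rw [main]
  have hy1 : ∑ c, ‖∑ c', (V : Matrix (Fin m) (Fin m) ℂ) c c' * φ c'‖ ^ 2 = 1 := by
    rw [l2_invariant _ (unitary_col_orth V) φ, hφ]
  rw [Hmeas]
  exact sum_negMulLog_prod _ _ hx1 hy1


lemma exists_ancilla_unitary (m : ℕ) [NeZero m] (φ : Fin m → ℂ)
    (hφ : ∑ j, ‖φ j‖ ^ 2 = 1) :
    ∃ V : Matrix.unitaryGroup (Fin m) ℂ,
      ∀ c, (∑ c', (V : Matrix (Fin m) (Fin m) ℂ) c c' * φ c')
        = if c = 0 then 1 else 0 := by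
  set φ' : EuclideanSpace ℂ (Fin m) := WithLp.toLp 2 φ with hφ'
  have hnorm : ‖φ'‖ = 1 := by
    have h2 : ‖φ'‖ ^ 2 = 1 := by
      rw [EuclideanSpace.norm_eq]
      rw [Real.sq_sqrt (Finset.sum_nonneg fun i _ => sq_nonneg _)]
      exact hφ
    nlinarith [norm_nonneg φ']
  have hON : Orthonormal ℂ (Set.restrict ({0} : Set (Fin m)) (fun _ : Fin m => φ')) := by
    constructor
    · intro i; exact hnorm
    · intro i j hij
      exact absurd (Subtype.ext (i.2.trans j.2.symm)) hij
  obtain ⟨b, hb⟩ := hON.exists_orthonormalBasis_extension_of_card_eq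
    (by simp [finrank_euclideanSpace])
  have hb0 : b 0 = φ' := hb 0 rfl
  set V : Matrix (Fin m) (Fin m) ℂ := fun j j' => (starRingEnd ℂ) (b j j') with hV
  have hinner : ∀ j l : Fin m, ∑ j', (starRingEnd ℂ) (b j j') * (b l j')
      = if j = l then 1 else 0 := by
    intro j l
    have h := orthonormal_iff_ite.mp b.orthonormal j l
    rw [← h, PiLp.inner_apply]
    simp [RCLike.inner_apply, mul_comm]
  have hmem : V ∈ Matrix.unitaryGroup (Fin m) ℂ := by
    rw [Matrix.mem_unitaryGroup_iff]
    ext j l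
    rw [Matrix.mul_apply, Matrix.one_apply, ← hinner j l]
    refine Finset.sum_congr rfl fun x _ => ?_
    change V j x * (star V) x l = _
    rw [Matrix.star_apply]
    simp [hV]
  refine ⟨⟨V, hmem⟩, fun c => ?_⟩
  show ∑ c', V c c' * φ' c' = if c = 0 then 1 else 0
  calc ∑ c', V c c' * φ' c' = ∑ c', (starRingEnd ℂ) (b c c') * (b 0 c') := by
        rw [hb0]
    _ = if c = 0 then 1 else 0 := hinner c 0


/-- `E_Hmin` is invariant under attaching an unentangled ancilla: for a multipartite pure
state `ψ` and a single-subsystem unit vector `φ`, `E_Hmin(ψ ⊗ φ) = E_Hmin(ψ)`. -/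
theorem EHmin_ancilla {ι : Type*} [Fintype ι] [DecidableEq ι] {d : ι → ℕ} (m : ℕ)
    (ψ : (∀ k, Fin (d k)) → ℂ) (hψ : ∑ i, ‖ψ i‖ ^ 2 = 1)
    (φ : Fin m → ℂ) (hφ : ∑ j, ‖φ j‖ ^ 2 = 1)
    (ψ' : (∀ k : ι ⊕ Unit, Fin (Sum.elim d (fun _ => m) k)) → ℂ)
    (hψ' : ∀ i, ψ' i = ψ (fun a => i (Sum.inl a)) * φ (i (Sum.inr ()))) :
    EHmin ψ' = EHmin ψ := by
  haveI : NeZero m := ⟨by rintro rfl; simp at hφ⟩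
  have hψ'1 : ∑ i, ‖ψ' i‖ ^ 2 = 1 := by
    rw [← Equiv.sum_comp (combineEquiv (fun k => Fin (Sum.elim d (fun _ => m) k)))
      (fun i => ‖ψ' i‖ ^ 2)]
    rw [Fintype.sum_prod_type]
    have hpt : ∀ (i : ∀ a, Fin (d a)) (c : Fin m),
        ‖ψ' (combineEquiv (fun k => Fin (Sum.elim d (fun _ => m) k)) (i, c))‖ ^ 2
          = ‖ψ i‖ ^ 2 * ‖φ c‖ ^ 2 := by
      intro i c
      rw [hψ' (combineEquiv _ (i, c)), norm_mul, mul_pow]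
      rfl
    refine Eq.trans (Finset.sum_congr rfl fun x _ => Finset.sum_congr rfl fun y _ => hpt x y) ?_
    rw [← Finset.sum_mul_sum]
    show (∑ i : ∀ a, Fin (d a), ‖ψ i‖ ^ 2) * (∑ j : Fin m, ‖φ j‖ ^ 2) = 1
    rw [hψ, hφ, mul_one]
  have bdd1 : BddBelow (Set.range fun U : ∀ k, Matrix.unitaryGroup (Fin (d k)) ℂ =>
      Hmeas (applyLocal (fun k => (U k : Matrix (Fin (d k)) (Fin (d k)) ℂ)) ψ)) := by
    refine ⟨0, ?_⟩
    rintro x ⟨U, rfl⟩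
    exact Hmeas_applyLocal_nonneg U ψ hψ
  have bdd2 : BddBelow (Set.range fun W : ∀ k : ι ⊕ Unit,
      Matrix.unitaryGroup (Fin (Sum.elim d (fun _ => m) k)) ℂ =>
      Hmeas (applyLocal (fun k => (W k : Matrix (Fin (Sum.elim d (fun _ => m) k))
        (Fin (Sum.elim d (fun _ => m) k)) ℂ)) ψ')) := by
    refine ⟨0, ?_⟩
    rintro x ⟨W, rfl⟩
    exact Hmeas_applyLocal_nonneg W ψ' hψ'1
  haveI : Nonempty (∀ k : ι ⊕ Unit, Matrix.unitaryGroup (Fin (Sum.elim d (fun _ => m) k)) ℂ) :=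
    ⟨fun _ => 1⟩
  haveI : Nonempty (∀ k : ι, Matrix.unitaryGroup (Fin (d k)) ℂ) := ⟨fun _ => 1⟩
  rw [EHmin, EHmin]
  apply le_antisymm
  · obtain ⟨V, hV⟩ := exists_ancilla_unitary m φ hφ
    refine le_ciInf fun U => ?_
    have step := ciInf_le bdd2 (fun k : ι ⊕ Unit =>
      Sum.rec (motive := fun k => Matrix.unitaryGroup (Fin (Sum.elim d (fun _ => m) k)) ℂ)
        U (fun _ => V) k)
    refine step.trans ?_
    rw [Hmeas_split ψ hψ φ hφ ψ' hψ' U V]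
    have hzero : ∑ c, Real.negMulLog
        (‖∑ c', (V : Matrix (Fin m) (Fin m) ℂ) c c' * φ c'‖ ^ 2) = 0 := by
      simp_rw [hV]
      refine Finset.sum_eq_zero fun c _ => ?_
      by_cases hc : c = 0 <;> simp [hc, Real.negMulLog]
    rw [hzero, add_zero]
  · refine le_ciInf fun W => ?_
    obtain ⟨U', hU'⟩ : ∃ U' : ∀ a, Matrix.unitaryGroup (Fin (d a)) ℂ,
        ∀ a, W (Sum.inl a) = U' a := ⟨fun a => W (Sum.inl a), fun a => rfl⟩
    obtain ⟨Vm, hVm⟩ : ∃ Vm : Matrix.unitaryGroup (Fin m) ℂ,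
        W (Sum.inr ()) = Vm := ⟨W (Sum.inr ()), rfl⟩
    have hsplit : (fun k : ι ⊕ Unit => ((W k : Matrix.unitaryGroup (Fin (Sum.elim d (fun _ => m) k)) ℂ) :
          Matrix (Fin (Sum.elim d (fun _ => m) k)) (Fin (Sum.elim d (fun _ => m) k)) ℂ))
        = (fun k : ι ⊕ Unit =>
          ((Sum.rec (motive := fun k => Matrix.unitaryGroup (Fin (Sum.elim d (fun _ => m) k)) ℂ)
            U' (fun _ => Vm) k :
            Matrix.unitaryGroup (Fin (Sum.elim d (fun _ => m) k)) ℂ) :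
            Matrix (Fin (Sum.elim d (fun _ => m) k)) (Fin (Sum.elim d (fun _ => m) k)) ℂ)) := by
      funext k
      cases k with
      | inl a => exact congrArg _ (hU' a)
      | inr u => cases u; exact congrArg _ hVm
    rw [hsplit, Hmeas_split ψ hψ φ hφ ψ' hψ' U' Vm]
    refine le_trans (ciInf_le bdd1 U') (le_add_of_nonneg_right ?_)
    refine Hsh_nonneg_of_sum_one _ (fun c => sq_nonneg _) ?_
    rw [l2_invariant _ (unitary_col_orth Vm) φ]
    exact hφ
end
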